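/- Let G be a directed graph with sink V_0 (no outgoing edges from V_0, every other vertex has a path to V_0) that does NOT contain the edge V_i → V_j, and suppose that for every minimal blocking set S of V_i to V_0, V_j ∉ S and S blocks V_j to V_0. Then adding the edge V_i → V_j to G does not change which sets block V_i to V_0: a set S ⊆ {V_1,...,V_n}\{V_i} blocks V_i to V_0 in G if and only if it blocks V_i to V_0 in G ∪ {V_i → V_j}. -/

import Mathlib

namespace GRN

variable {V : Type*}

/-- `p` is a vertex-simple directed path from `i` to `j` in the directed graph `E`. -/
def IsPath (E : V → V → Prop) (i j : V) (p : List V) : Prop :=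
  p.head? = some i ∧ p.getLast? = some j ∧ p.Chain' E ∧ p.Nodup

/-- `S` blocks `i` to `j`: every vertex-simple directed path from `i` to `j` meets `S`. -/
def Blocks (E : V → V → Prop) (S : Set V) (i j : V) : Prop :=
  ∀ p : List V, IsPath E i j p → ∃ v ∈ p, v ∈ S

/-- `S` is a minimal blocking set of `i` to `v0`. -/
def IsMinBlock (E : V → V → Prop) (v0 i : V) (S : Set V) : Prop :=
  S ⊆ ({v0, i} : Set V)ᶜ ∧ Blocks E S i v0 ∧ ∀ T : Set V, T ⊂ S → ¬ Blocks E T i v0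

/-- `v0` has no outgoing edges. -/
def Sink (E : V → V → Prop) (v0 : V) : Prop := ∀ w, ¬ E v0 w

/-- every other vertex has a directed path to `v0`. -/
def ReachAll (E : V → V → Prop) (v0 : V) : Prop :=
  ∀ i, i ≠ v0 → Relation.TransGen E i v0

end GRN

private lemma chain'_restrict {V : Type*} {E : V → V → Prop} {i j : V} :
    ∀ q : List V, i ∉ q → q.Chain' (fun a b => E a b ∨ (a = i ∧ b = j)) → q.Chain' E
  | [], _, _ => List.isChain_nil
  | [_], _, _ => List.isChain_singleton _
  | a :: b :: r, hmem, hch => by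
      simp only [List.Chain', List.isChain_cons_cons] at hch ⊢
      refine ⟨?_, chain'_restrict (b :: r) (fun h => hmem (List.mem_cons_of_mem _ h)) hch.2⟩
      rcases hch.1 with h | h
      · exact h
      · exact absurd (h.1 ▸ (List.mem_cons_self (a := a) (l := _))) hmem

open GRN in
/-- If `G` does not contain the edge `i → j`, and every minimal blocking set of `i` to `v0`
omits `j` and blocks `j` to `v0`, then adding the edge `i → j` does not change which sets
block `i` to `v0`. -/
theorem stmt_17 {V : Type*} [Fintype V] (E : V → V → Prop) (v0 : V)
    (hsink : Sink E v0) (hreach : ReachAll E v0)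
    (i j : V) (hij : i ≠ j) (hiv : i ≠ v0) (hjv : j ≠ v0)
    (hnoedge : ¬ E i j)
    (hcond : ∀ S : Set V, IsMinBlock E v0 i S → j ∉ S ∧ Blocks E S j v0) :
    ∀ S : Set V, S ⊆ ({v0, i} : Set V)ᶜ →
      (Blocks E S i v0 ↔ Blocks (fun a b => E a b ∨ (a = i ∧ b = j)) S i v0) := by
  intro S hS
  constructor
  · intro hb
    -- find a minimal blocking subset T of S
    have hne : {T : Set V | T ⊆ S ∧ Blocks E T i v0}.Nonempty := ⟨S, le_refl S, hb⟩
    obtain ⟨T, ⟨hTS, hTb⟩, hmin⟩ :=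
      (Finite.to_wellFoundedLT (α := Set V)).wf.has_min _ hne
    have hTmin : IsMinBlock E v0 i T := by
      refine ⟨hTS.trans hS, hTb, fun T' hT' hT'b => ?_⟩
      exact hmin T' ⟨(subset_of_ssubset hT').trans hTS, hT'b⟩ hT'
    obtain ⟨-, hTj⟩ := hcond T hTmin
    intro p hp
    obtain ⟨hhead, hlast, hchain, hnodup⟩ := hp
    -- p = i :: q
    obtain ⟨a, q, rfl⟩ : ∃ a q, p = a :: q := by
      cases p with
      | nil => simp at hhead
      | cons a q => exact ⟨a, q, rfl⟩
    rw [List.head?_cons, Option.some_inj] at hhead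
    subst a
    have hinq : i ∉ q := (List.nodup_cons.mp hnodup).1
    have hqchain : q.Chain' E := chain'_restrict q hinq (List.isChain_cons.mp hchain).2
    cases q with
    | nil =>
      simp only [List.getLast?_singleton, Option.some_inj] at hlast
      exact absurd hlast hiv
    | cons w r =>
      simp only [List.Chain', List.isChain_cons_cons] at hchain
      rcases hchain.1 with h | h
      · -- whole path is an E-path
        have : GRN.IsPath E i v0 (i :: w :: r) :=
          ⟨rfl, hlast, List.isChain_cons_cons.mpr ⟨h, hqchain⟩, hnodup⟩
        exact hb _ this
      · -- w = j, so w :: r is an E-path from j to v0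
        have hpath : GRN.IsPath E j v0 (w :: r) := by
          refine ⟨by rw [List.head?_cons, h.2], ?_, hqchain, (List.nodup_cons.mp hnodup).2⟩
          rw [← hlast, List.getLast?_cons_cons]
        obtain ⟨v, hv, hvT⟩ := hTj _ hpath
        exact ⟨v, List.mem_cons_of_mem _ hv, hTS hvT⟩
  · intro hb p hp
    obtain ⟨h1, h2, h3, h4⟩ := hp
    exact hb p ⟨h1, h2, h3.imp (fun _ _ h => Or.inl h), h4⟩
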